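/- There exists a constant c₁ > 0 such that for all s₁, s₂ ∈ ℝ one has c₁ · |s₁ − s₂|² ≤ |H(s₁) − H(s₂)|. -/

import Mathlib

open MeasureTheory

/-- The double-well potential `W(s) = (1 - s²)²`. -/
noncomputable def W (s : ℝ) : ℝ := (1 - s ^ 2) ^ 2

/-- `H(s) = ∫_{-1}^{s} √(min(W(r), 1 + r²)) dr`. -/
noncomputable def H (s : ℝ) : ℝ :=
  ∫ r in (-1 : ℝ)..s, Real.sqrt (min (W r) (1 + r ^ 2))

/-- The integrand of `H`. -/
noncomputable def gg (r : ℝ) : ℝ := Real.sqrt (min (W r) (1 + r ^ 2))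

/-- A pointwise lower bound for the integrand: the distance to `{-1, 1}`. -/
noncomputable def dd (r : ℝ) : ℝ := |r - 1| + |r + 1| - |r| - 1

/-- An antiderivative of `dd`. -/
noncomputable def Φ (r : ℝ) : ℝ :=
  (r - 1) * |r - 1| / 2 + (r + 1) * |r + 1| / 2 - r * |r| / 2 - r

lemma q_deriv (x : ℝ) : HasDerivAt (fun y : ℝ => y * |y| / 2) |x| x := by
  rcases lt_trichotomy x 0 with hx | rfl | hx
  · have h : HasDerivAt (fun y : ℝ => -(y * y) / 2) |x| x := by
      have := (((hasDerivAt_id x).mul (hasDerivAt_id x)).neg.div_const 2)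
      simpa [abs_of_neg hx, id] using this.congr_deriv (by simp only [id]; ring)
    apply h.congr_of_eventuallyEq
    filter_upwards [Iio_mem_nhds hx] with y hy
    rw [abs_of_neg hy]; ring
  · rw [hasDerivAt_iff_isLittleO]
    simp only [abs_zero, smul_zero, sub_zero, mul_zero, zero_mul, zero_div, sub_zero]
    rw [Asymptotics.isLittleO_iff]
    intro c hc
    filter_upwards [Metric.ball_mem_nhds 0 (by linarith : (0:ℝ) < 2*c)] with y hy
    simp only [Metric.mem_ball, Real.dist_eq, sub_zero] at hy
    have : |y * |y| / 2| = |y| * |y| / 2 := by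
      rw [abs_div, abs_mul, abs_abs]; norm_num
    rw [Real.norm_eq_abs, Real.norm_eq_abs, this]
    nlinarith [abs_nonneg y]
  · have h : HasDerivAt (fun y : ℝ => y * y / 2) |x| x := by
      have := (((hasDerivAt_id x).mul (hasDerivAt_id x)).div_const 2)
      simpa [abs_of_pos hx, id] using this.congr_deriv (by simp only [id]; ring)
    apply h.congr_of_eventuallyEq
    filter_upwards [Ioi_mem_nhds hx] with y hy
    rw [abs_of_pos hy]

lemma Φ_deriv (r : ℝ) : HasDerivAt Φ (dd r) r := by
  have h1 : HasDerivAt (fun y : ℝ => (y - 1) * |y - 1| / 2) (|r - 1| * 1) r :=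
    by have := HasDerivAt.comp r (q_deriv (r - 1)) ((hasDerivAt_id r).sub_const 1); exact this
  have h2 : HasDerivAt (fun y : ℝ => (y + 1) * |y + 1| / 2) (|r + 1| * 1) r :=
    by have := HasDerivAt.comp r (q_deriv (r + 1)) ((hasDerivAt_id r).add_const 1); exact this
  have h3 : HasDerivAt (fun y : ℝ => y * |y| / 2) |r| r := q_deriv r
  have := ((h1.add h2).sub h3).sub (hasDerivAt_id r)
  unfold Φ dd
  simp only [mul_one] at this; exact this

lemma dd_eq (r : ℝ) : dd r = |(|r| - 1)| := by
  unfold dd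
  rcases abs_cases (r-1) with ⟨e1,h1⟩|⟨e1,h1⟩ <;>
  rcases abs_cases (r+1) with ⟨e2,h2⟩|⟨e2,h2⟩ <;>
  rcases abs_cases r with ⟨e3,h3⟩|⟨e3,h3⟩ <;>
  rcases abs_cases (|r| - 1) with ⟨e4,h4⟩|⟨e4,h4⟩ <;>
  rw [e1, e2, e3] at * <;> linarith [e4]

lemma dd_le_gg (r : ℝ) : dd r ≤ gg r := by
  rw [dd_eq]
  unfold gg W
  apply Real.le_sqrt_of_sq_le
  rw [le_min_iff]
  constructor
  · have h : (1 - r^2)^2 = ((|r| - 1) * (|r| + 1))^2 := by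
      have := sq_abs r; nlinarith [sq_abs r]
    rw [sq_abs, h]
    nlinarith [sq_nonneg (|r| - 1), abs_nonneg r, sq_nonneg ((|r|-1)*|r|)]
  · rw [sq_abs]
    nlinarith [abs_nonneg r, sq_abs r]

lemma gg_cont : Continuous gg := by
  unfold gg W
  exact Real.continuous_sqrt.comp
    ((by continuity : Continuous fun r : ℝ => (1 - r^2)^2).min (by continuity))

lemma dd_cont : Continuous dd := by unfold dd; continuity

set_option maxHeartbeats 2000000 in
lemma key_ineq (a b : ℝ) (hab : a ≤ b) : (b - a) ^ 2 / 16 ≤ Φ b - Φ a := by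
  unfold Φ
  rcases abs_cases (a-1) with ⟨e1,h1⟩|⟨e1,h1⟩ <;>
  rcases abs_cases (a+1) with ⟨e2,h2⟩|⟨e2,h2⟩ <;>
  rcases abs_cases a with ⟨e3,h3⟩|⟨e3,h3⟩ <;>
  rcases abs_cases (b-1) with ⟨e4,h4⟩|⟨e4,h4⟩ <;>
  rcases abs_cases (b+1) with ⟨e5,h5⟩|⟨e5,h5⟩ <;>
  rcases abs_cases b with ⟨e6,h6⟩|⟨e6,h6⟩ <;>
  rw [e1, e2, e3, e4, e5, e6] <;>
  first
  | linarith
  | nlinarith [sq_nonneg (a+b), sq_nonneg (a-b), sq_nonneg (3*(b-a)-8), sq_nonneg (a+b-2),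
      sq_nonneg (a+b+2), sq_nonneg (b-a-2), sq_nonneg (3*(a+b)),
      mul_nonneg (sub_nonneg.2 hab) (sub_nonneg.2 hab)]

/-- There exists `c₁ > 0` such that `c₁ · |s₁ − s₂|² ≤ |H(s₁) − H(s₂)|`
for all `s₁, s₂ ∈ ℝ` (lower bound in estimate (propH) of the
Modica–Mortola trick). -/
theorem H_lower_bound :
    ∃ c₁ : ℝ, 0 < c₁ ∧ ∀ s₁ s₂ : ℝ, c₁ * |s₁ - s₂| ^ 2 ≤ |H s₁ - H s₂| := by
  refine ⟨1/16, by norm_num, ?_⟩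
  have key : ∀ s₁ s₂ : ℝ, s₂ ≤ s₁ → 1/16 * |s₁ - s₂| ^ 2 ≤ |H s₁ - H s₂| := by
    intro s₁ s₂ h
    have hg2 : IntervalIntegrable gg volume s₂ s₁ := gg_cont.intervalIntegrable _ _
    have hd2 : IntervalIntegrable dd volume s₂ s₁ := dd_cont.intervalIntegrable _ _
    have hHdiff : H s₁ - H s₂ = ∫ r in s₂..s₁, gg r := by
      have := intervalIntegral.integral_add_adjacent_intervals
        (gg_cont.intervalIntegrable (-1) s₂) hg2
      unfold H gg at *
      linarith [this]
    have hd_int : (∫ r in s₂..s₁, dd r) = Φ s₁ - Φ s₂ :=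
      intervalIntegral.integral_eq_sub_of_hasDerivAt (fun x _ => Φ_deriv x) hd2
    have hmono : (∫ r in s₂..s₁, dd r) ≤ ∫ r in s₂..s₁, gg r :=
      intervalIntegral.integral_mono_on h hd2 hg2 (fun x _ => dd_le_gg x)
    have hkey := key_ineq s₂ s₁ h
    have hpos : (s₁ - s₂) ^ 2 / 16 ≤ H s₁ - H s₂ := by linarith
    have habs : |H s₁ - H s₂| = H s₁ - H s₂ :=
      abs_of_nonneg (le_trans (by positivity) hpos)
    rw [habs, abs_of_nonneg (by linarith : (0:ℝ) ≤ s₁ - s₂)]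
    linarith
  intro s₁ s₂
  rcases le_total s₂ s₁ with h | h
  · exact key s₁ s₂ h
  · have := key s₂ s₁ h
    rwa [abs_sub_comm (H s₂), abs_sub_comm s₂] at this
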